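/- arXiv:2211.16338 — 4 statements merged into one kernel-verified Lean document; each statement's English description precedes it below -/
import Mathlib

section
/- Let X be a set and let T : X³ → X³, T(x,y,z) = (u(x,y,z), v(x,y,z), w(x,y,z)), be a tetrahedron map. Then the map S : X⁴ → X⁴ defined by S(x,y,z,t) = (u(x,y,z), v(x,y,z), w(x,y,z), t) is a 4-simplex map. -/
noncomputable section

namespace Paper4Simplex

variable {X : Type*}

/-- Quadruples over `X`. -/
abbrev Q (X : Type*) : Type _ := X × X × X × X

/-- 10-tuples over `X`. -/
abbrev P (X : Type*) : Type _ := X × X × X × X × X × X × X × X × X × X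

/-- `S` acting on coordinates 1,2,3,4 of a 10-tuple. -/
def app1234 (S : Q X → Q X) : P X → P X := fun p =>
  match p with
  | (a,b,c,d,e,f,g,h,i,j) =>
    match S (a,b,c,d) with
    | (A,B,C,D) => (A,B,C,D,e,f,g,h,i,j)

/-- `S` acting on coordinates 1,5,6,7 of a 10-tuple. -/
def app1567 (S : Q X → Q X) : P X → P X := fun p =>
  match p with
  | (a,b,c,d,e,f,g,h,i,j) =>
    match S (a,e,f,g) with
    | (A,E,F,G) => (A,b,c,d,E,F,G,h,i,j)

/-- `S` acting on coordinates 2,5,8,9 of a 10-tuple. -/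
def app2589 (S : Q X → Q X) : P X → P X := fun p =>
  match p with
  | (a,b,c,d,e,f,g,h,i,j) =>
    match S (b,e,h,i) with
    | (B,E,H,I) => (a,B,c,d,E,f,g,H,I,j)

/-- `S` acting on coordinates 3,6,8,10 of a 10-tuple. -/
def app368X (S : Q X → Q X) : P X → P X := fun p =>
  match p with
  | (a,b,c,d,e,f,g,h,i,j) =>
    match S (c,f,h,j) with
    | (C,F,H,J) => (a,b,C,d,e,F,g,H,i,J)

/-- `S` acting on coordinates 4,7,9,10 of a 10-tuple. -/
def app479X (S : Q X → Q X) : P X → P X := fun p =>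
  match p with
  | (a,b,c,d,e,f,g,h,i,j) =>
    match S (d,g,i,j) with
    | (D,G,I,J) => (a,b,c,D,e,f,G,h,I,J)

def proj1234 : P X → Q X := fun p => match p with
  | (a,b,c,d,_,_,_,_,_,_) => (a,b,c,d)

def proj1567 : P X → Q X := fun p => match p with
  | (a,_,_,_,e,f,g,_,_,_) => (a,e,f,g)

def proj2589 : P X → Q X := fun p => match p with
  | (_,b,_,_,e,_,_,h,i,_) => (b,e,h,i)

def proj368X : P X → Q X := fun p => match p with
  | (_,_,c,_,_,f,_,h,_,j) => (c,f,h,j)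

def proj479X : P X → Q X := fun p => match p with
  | (_,_,_,d,_,_,g,_,i,j) => (d,g,i,j)

/-- Left-hand side of the 4-simplex equation. -/
def lhs (S : Q X → Q X) : P X → P X :=
  app1234 S ∘ app1567 S ∘ app2589 S ∘ app368X S ∘ app479X S

/-- Right-hand side of the 4-simplex equation. -/
def rhs (S : Q X → Q X) : P X → P X :=
  app479X S ∘ app368X S ∘ app2589 S ∘ app1567 S ∘ app1234 S

/-- All denominators occurring on the left-hand side composition are nonzero:
`D` holds at each quadruple to which `S` is applied. -/
def lhsDom (D : Q X → Prop) (S : Q X → Q X) (p : P X) : Prop :=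
  D (proj479X p) ∧
  D (proj368X (app479X S p)) ∧
  D (proj2589 (app368X S (app479X S p))) ∧
  D (proj1567 (app2589 S (app368X S (app479X S p)))) ∧
  D (proj1234 (app1567 S (app2589 S (app368X S (app479X S p)))))

/-- All denominators occurring on the right-hand side composition are nonzero. -/
def rhsDom (D : Q X → Prop) (S : Q X → Q X) (p : P X) : Prop :=
  D (proj1234 p) ∧
  D (proj1567 (app1234 S p)) ∧
  D (proj2589 (app1567 S (app1234 S p))) ∧
  D (proj368X (app2589 S (app1567 S (app1234 S p)))) ∧
  D (proj479X (app368X S (app2589 S (app1567 S (app1234 S p)))))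


/-! Statement 0: a tetrahedron map extends trivially to a 4-simplex map. -/

/-- Triples over `X`. -/
abbrev H (X : Type*) : Type _ := X × X × X

/-- 6-tuples over `X`. -/
abbrev P6 (X : Type*) : Type _ := X × X × X × X × X × X

/-- `T` acting on coordinates 1,2,3 of a 6-tuple. -/
def t123 (T : H X → H X) : P6 X → P6 X := fun p =>
  match p with
  | (a,b,c,d,e,f) => match T (a,b,c) with | (A,B,C) => (A,B,C,d,e,f)

/-- `T` acting on coordinates 1,4,5 of a 6-tuple. -/
def t145 (T : H X → H X) : P6 X → P6 X := fun p =>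
  match p with
  | (a,b,c,d,e,f) => match T (a,d,e) with | (A,D,E) => (A,b,c,D,E,f)

/-- `T` acting on coordinates 2,4,6 of a 6-tuple. -/
def t246 (T : H X → H X) : P6 X → P6 X := fun p =>
  match p with
  | (a,b,c,d,e,f) => match T (b,d,f) with | (B,D,F) => (a,B,c,D,e,F)

/-- `T` acting on coordinates 3,5,6 of a 6-tuple. -/
def t356 (T : H X → H X) : P6 X → P6 X := fun p =>
  match p with
  | (a,b,c,d,e,f) => match T (c,e,f) with | (C,E,F) => (a,b,C,d,E,F)

/-- The functional tetrahedron (Zamolodchikov) equation. -/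
def IsTetrahedronMap (T : H X → H X) : Prop :=
  t123 T ∘ t145 T ∘ t246 T ∘ t356 T = t356 T ∘ t246 T ∘ t145 T ∘ t123 T

/-- The set-theoretical 4-simplex (Bazhanov–Stroganov) equation. -/
def Is4SimplexMap (S : Q X → Q X) : Prop := lhs S = rhs S

/-- If `T : X³ → X³`, `T(x,y,z) = (u,v,w)`, is a tetrahedron map, then
`S : X⁴ → X⁴`, `S(x,y,z,t) = (u(x,y,z), v(x,y,z), w(x,y,z), t)`, is a 4-simplex map. -/
theorem trivial_extension_is_4simplex {X : Type*} (T : H X → H X)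
    (hT : IsTetrahedronMap T) :
    Is4SimplexMap (fun q : Q X =>
      match q with
      | (x, y, z, t) =>
        match T (x, y, z) with
        | (u, v, w) => (u, v, w, t)) := by
  funext p
  obtain ⟨a,b,c,d,e,f,g,h,i,j⟩ := p
  have k := congrFun hT (a,b,c,e,f,h)
  simp only [Function.comp, t123, t145, t246, t356] at k
  simp only [lhs, rhs, Function.comp, app1234, app1567, app2589, app368X, app479X]
  simp only [Prod.mk.injEq] at k ⊢
  tauto

end Paper4Simplex
end
end

section
/- Let κ ∈ ℂ, κ ≠ 0. The map S₁ : (ℂ²)⁴ → (ℂ²)⁴ given by S₁(x₁,x₂,y₁,y₂,z₁,z₂,t₁,t₂) = (x₁, x₂, (y₁ − x₁z₁)/κ, y₂, z₁, t₂, t₁y₂/x₂, z₂) is a 4-simplex map, i.e. it satisfies the 4-simplex equation at every point of (ℂ²)^{10} at which all denominators occurring in both composed sides are nonzero. -/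
noncomputable section

namespace Paper4Simplex

variable {X : Type*}

/-! Case a of the Kashaev–Korepanov–Sergeev type 4-simplex maps. -/

abbrev C2 : Type := ℂ × ℂ

/-- The map S₁ of case a. -/
def Sa1 (κ : ℂ) : Q C2 → Q C2 := fun q =>
  match q with
  | ((x1,x2),(y1,y2),(z1,z2),(t1,t2)) =>
    ((x1, x2), ((y1 - x1*z1)/κ, y2), (z1, t2), (t1*y2/x2, z2))

/-- The map S₂ of case a. -/
def Sa2 (κ : ℂ) : Q C2 → Q C2 := fun q =>
  match q with
  | ((x1,x2),(y1,y2),(z1,z2),(t1,t2)) =>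
    ((x1, x2), ((y1 - x1*z1)/κ, y2), (z1, y2), (t1*y2/x2, t2*z2/y2))

/-- Nonvanishing of the denominators of `Sa1` (besides the parameter κ). -/
def DomA1 : Q C2 → Prop := fun q =>
  match q with
  | ((_,x2),_,_,_) => x2 ≠ 0

/-- Nonvanishing of the denominators of `Sa2` (besides the parameter κ). -/
def DomA2 : Q C2 → Prop := fun q =>
  match q with
  | ((_,x2),(_,y2),_,_) => x2 ≠ 0 ∧ y2 ≠ 0

/-- The map S₁ : (ℂ²)⁴ → (ℂ²)⁴,
S₁(x₁,x₂,y₁,y₂,z₁,z₂,t₁,t₂) = (x₁, x₂, (y₁−x₁z₁)/κ, y₂, z₁, t₂, t₁y₂/x₂, z₂),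
is a 4-simplex map: it satisfies the 4-simplex equation at every point of (ℂ²)¹⁰
at which all denominators occurring in both composed sides are nonzero. -/
theorem Sa1_is_4simplex (κ : ℂ) (hκ : κ ≠ 0) (p : P C2)
    (hL : lhsDom DomA1 (Sa1 κ) p) (hR : rhsDom DomA1 (Sa1 κ) p) :
    lhs (Sa1 κ) p = rhs (Sa1 κ) p := by
  obtain ⟨⟨a1,a2⟩,⟨b1,b2⟩,⟨c1,c2⟩,⟨d1,d2⟩,⟨e1,e2⟩,⟨f1,f2⟩,⟨g1,g2⟩,⟨h1,h2⟩,⟨i1,i2⟩,⟨j1,j2⟩⟩ := p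
  simp only [lhsDom, rhsDom, lhs, rhs, app1234, app1567, app2589, app368X, app479X,
    proj1234, proj1567, proj2589, proj368X, proj479X, Sa1, DomA1, Function.comp] at *
  obtain ⟨h1,h2,h3,h4,h5⟩ := hL
  obtain ⟨g1',g2',g3',g4',g5'⟩ := hR
  refine Prod.ext ?_ (Prod.ext ?_ (Prod.ext ?_ (Prod.ext ?_ (Prod.ext ?_ (Prod.ext ?_
    (Prod.ext ?_ (Prod.ext ?_ (Prod.ext ?_ ?_)))))))) <;>
    refine Prod.ext ?_ ?_ <;> simp_all <;> field_simp <;> ring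

end Paper4Simplex
end
end

section
/- Let κ ∈ ℂ, κ ≠ 0. The map S₂ : (ℂ²)⁴ → (ℂ²)⁴ given by S₂(x₁,x₂,y₁,y₂,z₁,z₂,t₁,t₂) = (x₁, x₂, (y₁ − x₁z₁)/κ, y₂, z₁, y₂, t₁y₂/x₂, t₂z₂/y₂) is a 4-simplex map, i.e. it satisfies the 4-simplex equation at every point of (ℂ²)^{10} at which all denominators occurring in both composed sides are nonzero. -/
noncomputable section

namespace Paper4Simplex

variable {X : Type*}

/-- The map S₂ : (ℂ²)⁴ → (ℂ²)⁴,
S₂(x₁,x₂,y₁,y₂,z₁,z₂,t₁,t₂) = (x₁, x₂, (y₁−x₁z₁)/κ, y₂, z₁, y₂, t₁y₂/x₂, t₂z₂/y₂),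
is a 4-simplex map: it satisfies the 4-simplex equation at every point of (ℂ²)¹⁰
at which all denominators occurring in both composed sides are nonzero. -/
theorem Sa2_is_4simplex (κ : ℂ) (hκ : κ ≠ 0) (p : P C2)
    (hL : lhsDom DomA2 (Sa2 κ) p) (hR : rhsDom DomA2 (Sa2 κ) p) :
    lhs (Sa2 κ) p = rhs (Sa2 κ) p := by
  obtain ⟨⟨a1,a2⟩,⟨b1,b2⟩,⟨c1,c2⟩,⟨d1,d2⟩,⟨e1,e2⟩,⟨f1,f2⟩,⟨g1,g2⟩,⟨h1,h2⟩,⟨i1,i2⟩,⟨j1,j2⟩⟩ := p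
  simp only [lhsDom, rhsDom, lhs, rhs, app1234, app1567, app2589, app368X, app479X,
    proj1234, proj1567, proj2589, proj368X, proj479X, Sa2, DomA2, Function.comp, Prod.mk.injEq] at hL hR ⊢
  obtain ⟨⟨h1a,h1b⟩,⟨h2a,h2b⟩,⟨h3a,h3b⟩,⟨h4a,h4b⟩,⟨h5a,h5b⟩⟩ := hL
  obtain ⟨⟨k1a,k1b⟩,⟨k2a,k2b⟩,⟨k3a,k3b⟩,⟨k4a,k4b⟩,⟨k5a,k5b⟩⟩ := hR
  and_intros <;> (try field_simp) <;> (try trivial) <;> ring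

end Paper4Simplex
end
end

section
/- Let S : (ℂ³)⁴ → (ℂ³)⁴ be the Kadomtsev–Petviashvili type 4-simplex map with components (u₁,u₂,u₃,v₁,v₂,v₃,w₁,w₂,w₃,r₁,r₂,r₃) as in the paper (u₁ = x₁y₁/(z₁ + x₁(y₁ − z₁ + z₂ − y₁z₂)), u₂ = (y₂(1 − z₁) + x₂y₁(z₂ − 1) + x₂y₂(z₁ − z₂))/((1 − x₂)(z₂ − z₁) + (1 − z₂)(y₂ − x₂y₁)), u₃ = (t₁ − t₂)x₃y₃/((t₁ − 1)x₃ − (t₂ − 1)y₃), v₁ = z₁ + x₁(y₁ − z₁ + z₂ − y₁z₂), v₂ = v₁·[(1 − x₂)y₂z₁ − (y₁ − y₂)x₂z₂]/(x₁(y₁ − y₂)(z₁ − z₂) − z₁(x₂y₁ − y₂)), v₃ = (t₁ − t₂)x₃y₃/(t₁x₃ − t₂y₃), w₁ = (x₁ − x₂)y₁z₁[y₁x₂(z₂ − 1) + (z₁ − z₂)(x₂ − 1) − y₂(z₂ − 1)]/Λ, w₂ = [x₁z₂(y₁ − y₂) + y₂z₁(x₁ − 1)][y₁x₂(z₂ −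 1) + (z₁ − z₂)(x₂ − 1) − y₂(z₂ − 1)]/Λ, w₃ = t₃, r₁ = t₁[(t₁ − 1)x₃ − (t₂ − 1)y₃]/((t₁ − t₂)y₃), r₂ = t₂[(t₁ − 1)x₃ − (t₂ − 1)y₃]/((t₁ − t₂)x₃), r₃ = z₃). Then at every point where all denominators are nonzero the following identities hold: u₁v₁ = x₁y₁, (v₂ − 1)(w₂ − 1) = (y₂ − 1)(z₂ − 1), u₃r₁ = x₃t₁, v₃(1 − r₂) = y₃(1 − t₂), w₃r₃ = z₃t₃ and w₃ + r₃ = z₃ + t₃; that is, I₁ = x₁y₁, I₂ = (y₂ − 1)(z₂ − 1), I₃ = x₃t₁, I₄ = y₃(1 − t₂), I₅ = z₃t₃ and I₆ = z₃ + t₃ are invariants of S. -/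
noncomputable section

namespace Paper4Simplex

variable {X : Type*}

/-! The Kadomtsev–Petviashvili type 4-simplex map. -/

abbrev C3 : Type := ℂ × ℂ × ℂ

/-- The quantity Λ of the paper. -/
def Lam (x1 x2 y1 y2 z1 z2 : ℂ) : ℂ :=
  y2*z1*(z1 - 1) - x2*z1*(y1*(z2 - 1) + y2*(z1 - z2))
    + x1*y2*(z1 - z2)*(1 - z1 + x2*(z1 - z2))
    + x1*y1*(x2*z2*(y1 - y2)*(z2 - 1) + (z2 - z1)*(1 - x2*z2)
        + z1*y2*(x2 - 1)*(z2 - 1))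

/-- The KP type 4-simplex map. -/
def Skp : Q C3 → Q C3 := fun q =>
  match q with
  | ((x1,x2,x3),(y1,y2,y3),(z1,z2,z3),(t1,t2,t3)) =>
    ((x1*y1/(z1 + x1*(y1 - z1 + z2 - y1*z2)),
      (y2*(1 - z1) + x2*y1*(z2 - 1) + x2*y2*(z1 - z2))
        / ((1 - x2)*(z2 - z1) + (1 - z2)*(y2 - x2*y1)),
      (t1 - t2)*x3*y3/((t1 - 1)*x3 - (t2 - 1)*y3)),
     (z1 + x1*(y1 - z1 + z2 - y1*z2),
      (z1 + x1*(y1 - z1 + z2 - y1*z2))*((1 - x2)*y2*z1 - (y1 - y2)*x2*z2)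
        / (x1*(y1 - y2)*(z1 - z2) - z1*(x2*y1 - y2)),
      (t1 - t2)*x3*y3/(t1*x3 - t2*y3)),
     ((x1 - x2)*y1*z1*(y1*x2*(z2 - 1) + (z1 - z2)*(x2 - 1) - y2*(z2 - 1))
        / Lam x1 x2 y1 y2 z1 z2,
      (x1*z2*(y1 - y2) + y2*z1*(x1 - 1))
        * (y1*x2*(z2 - 1) + (z1 - z2)*(x2 - 1) - y2*(z2 - 1))
        / Lam x1 x2 y1 y2 z1 z2,
      t3),
     (t1*((t1 - 1)*x3 - (t2 - 1)*y3)/((t1 - t2)*y3),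
      t2*((t1 - 1)*x3 - (t2 - 1)*y3)/((t1 - t2)*x3),
      z3))

/-- Nonvanishing of the denominators of `Skp`. -/
def DomKP : Q C3 → Prop := fun q =>
  match q with
  | ((x1,x2,x3),(y1,y2,y3),(z1,z2,_),(t1,t2,_)) =>
    z1 + x1*(y1 - z1 + z2 - y1*z2) ≠ 0 ∧
    (1 - x2)*(z2 - z1) + (1 - z2)*(y2 - x2*y1) ≠ 0 ∧
    (t1 - 1)*x3 - (t2 - 1)*y3 ≠ 0 ∧
    x1*(y1 - y2)*(z1 - z2) - z1*(x2*y1 - y2) ≠ 0 ∧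
    t1*x3 - t2*y3 ≠ 0 ∧
    Lam x1 x2 y1 y2 z1 z2 ≠ 0 ∧
    (t1 - t2)*y3 ≠ 0 ∧
    (t1 - t2)*x3 ≠ 0

/-- For the KP type 4-simplex map S, writing
S(x₁,x₂,x₃,y₁,y₂,y₃,z₁,z₂,z₃,t₁,t₂,t₃) = (u₁,u₂,u₃,v₁,v₂,v₃,w₁,w₂,w₃,r₁,r₂,r₃),
at every point where all denominators are nonzero one has u₁v₁ = x₁y₁,
(v₂−1)(w₂−1) = (y₂−1)(z₂−1), u₃r₁ = x₃t₁, v₃(1−r₂) = y₃(1−t₂), w₃r₃ = z₃t₃ and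
w₃+r₃ = z₃+t₃; that is, I₁ = x₁y₁, I₂ = (y₂−1)(z₂−1), I₃ = x₃t₁, I₄ = y₃(1−t₂),
I₅ = z₃t₃ and I₆ = z₃+t₃ are invariants of S. -/
theorem Skp_invariants :
    ∀ x1 x2 x3 y1 y2 y3 z1 z2 z3 t1 t2 t3 : ℂ,
      DomKP ((x1,x2,x3),(y1,y2,y3),(z1,z2,z3),(t1,t2,t3)) →
      match Skp ((x1,x2,x3),(y1,y2,y3),(z1,z2,z3),(t1,t2,t3)) with
      | ((u1,_,u3),(v1,v2,v3),(_,w2,w3),(r1,r2,r3)) =>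
        u1*v1 = x1*y1 ∧
        (v2 - 1)*(w2 - 1) = (y2 - 1)*(z2 - 1) ∧
        u3*r1 = x3*t1 ∧
        v3*(1 - r2) = y3*(1 - t2) ∧
        w3*r3 = z3*t3 ∧
        w3 + r3 = z3 + t3 := by
  intro x1 x2 x3 y1 y2 y3 z1 z2 z3 t1 t2 t3 h
  obtain ⟨h1, h2, h3, h4, h5, h6, h7, h8⟩ := h
  simp only [Skp, Lam] at *
  refine ⟨?_, ?_, ?_, ?_, ?_, ?_⟩
  · field_simp
  · rw [div_sub_one h4, div_sub_one h6, div_mul_div_comm, div_eq_iff (mul_ne_zero h4 h6)]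
    ring
  · rw [div_mul_div_comm, div_eq_iff (mul_ne_zero h3 h7)]
    ring
  · rw [one_sub_div h8, div_mul_div_comm, div_eq_iff (mul_ne_zero h5 h8)]
    ring
  · ring
  · ring


end Paper4Simplex
end
end
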